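/- Let R be a fusion ring with basis B and fusion subsets S, T with double-coset classes Λ₁,…,Λ_l and A_i = Σ_{X∈Λ_i} FPdim(X)·X. The eigenspace of the operator x ↦ R_S·x·R_T on R ⊗ ℝ corresponding to the eigenvalue FPdim(S)·FPdim(T) has the family (A_i)_{1≤i≤l} as a basis, and FPdim(S)·FPdim(T) is the largest eigenvalue of this operator. -/

import Mathlib

open Finset

/-- A fusion ring with distinguished basis indexed by `ι`: nonnegative integer structure
constants `N`, unit basis element `one`, involution `star`, and the Frobenius–Perron
dimension `fp`, the (unique) ring homomorphism to `ℝ` positive on the basis. -/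
structure FusionRing (ι : Type) [Fintype ι] [DecidableEq ι] where
  N : ι → ι → ι → ℕ
  one : ι
  star : ι → ι
  assoc : ∀ a b c d, ∑ x, N a b x * N x c d = ∑ x, N b c x * N a x d
  one_mul : ∀ a b, N one a b = if a = b then 1 else 0
  mul_one : ∀ a b, N a one b = if a = b then 1 else 0
  star_invol : ∀ a, star (star a) = a
  N_one : ∀ a b, N a b one = if b = star a then 1 else 0
  N_star : ∀ a b c, N a b c = N (star b) (star a) (star c)
  fp : ι → ℝ
  fp_pos : ∀ a, 0 < fp a
  fp_one : fp one = 1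
  fp_hom : ∀ a b, fp a * fp b = ∑ c, (N a b c : ℝ) * fp c

namespace FusionRing

variable {ι : Type} [Fintype ι] [DecidableEq ι] (R : FusionRing ι)

set_option linter.unusedVariables false
open scoped Classical

/-- Multiplication of `R ⊗ ℝ`, written on coefficient vectors in the basis `ι`. -/
noncomputable def mul (x y : ι → ℝ) : ι → ℝ :=
  fun c => ∑ a, ∑ b, x a * y b * (R.N a b c : ℝ)

/-- The basis element `a` viewed as a coefficient vector. -/
def e (R : FusionRing ι) (a : ι) : ι → ℝ := fun c => if c = a then 1 else 0

/-- The linear extension of the involution `*`. -/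
def starVec (x : ι → ℝ) : ι → ℝ := fun c => x (R.star c)

/-- The standard bilinear form, `m(a,b) = δ_{a,b}` on basis elements. -/
def m (R : FusionRing ι) (x y : ι → ℝ) : ℝ := ∑ a, x a * y a

/-- `S` is the basis of a fusion subring: contains the unit, closed under `*`, and closed
under taking constituents of products. -/
def IsFusionSubset (S : Finset ι) : Prop :=
  R.one ∈ S ∧ (∀ a ∈ S, R.star a ∈ S) ∧ ∀ a ∈ S, ∀ b ∈ S, ∀ c, 0 < R.N a b c → c ∈ S

/-- The regular element `R_S = ∑_{d ∈ S} FPdim(d)·d` of a fusion subset `S`. -/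
def reg (S : Finset ι) : ι → ℝ := fun c => if c ∈ S then R.fp c else 0

/-- `FPdim(S) = ∑_{d ∈ S} FPdim(d)²`. -/
def fpdimS (S : Finset ι) : ℝ := ∑ d ∈ S, R.fp d ^ 2

/-- The double coset relation relative to fusion subsets `S`, `T`:
`X ∼ Y` iff `Y` occurs with positive multiplicity in `D·X·E` for some `D ∈ S`, `E ∈ T`. -/
def dcRel (S T : Finset ι) (X Y : ι) : Prop :=
  ∃ D ∈ S, ∃ E ∈ T, 0 < ∑ a, R.N D X a * R.N a E Y

/-- `A_i = ∑_{Y ∈ Λ_i} FPdim(Y)·Y` where `Λ_i` is the double coset of `X`. -/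
noncomputable def classVec (S T : Finset ι) (X : ι) : ι → ℝ :=
  fun c => if R.dcRel S T X c then R.fp c else 0

end FusionRing

set_option linter.unreachableTactic false
set_option linter.unusedTactic false

namespace FusionRing

variable {ι : Type} [Fintype ι] [DecidableEq ι] (R : FusionRing ι)
open scoped Classical

lemma N_cyc (a b c : ι) : R.N a b (R.star c) = R.N b c (R.star a) := by
  have h := R.assoc a b c R.one
  simp only [R.N_one] at h
  have e1 : ∀ x : ι, (if c = R.star x then (1:ℕ) else 0) = if x = R.star c then 1 else 0 := by
    intro x
    by_cases hx : x = R.star c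
    · subst hx; simp [R.star_invol]
    · rw [if_neg hx, if_neg]
      intro h'; exact hx (by rw [h', R.star_invol])
  simp only [e1, mul_ite, mul_one, mul_zero, Finset.sum_ite_eq', Finset.mem_univ,
    if_true] at h
  simpa using h

lemma I1 (a b c : ι) : R.N a b c = R.N b (R.star c) (R.star a) := by
  have := R.N_cyc a b (R.star c)
  rwa [R.star_invol] at this

lemma I3 (a b c : ι) : R.N a b c = R.N (R.star a) c b := by
  rw [R.N_star a b c, R.I1]
  simp [R.star_invol]

lemma fpdim_pos : 0 < ∑ d : ι, R.fp d ^ 2 :=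
  Finset.sum_pos (fun d _ => pow_pos (R.fp_pos d) 2) ⟨R.one, Finset.mem_univ _⟩

lemma fp_star (b : ι) : R.fp (R.star b) = R.fp b := by
  have key : ∀ c, ∑ d : ι, (R.N b d c : ℝ) * R.fp d = R.fp (R.star b) * R.fp c := by
    intro c
    rw [R.fp_hom]
    exact Finset.sum_congr rfl fun d _ => by rw [R.I3 b d c]
  have h1 : ∑ d : ι, R.fp d * ∑ c : ι, (R.N b d c : ℝ) * R.fp c
      = R.fp b * ∑ d : ι, R.fp d ^ 2 := by
    rw [Finset.mul_sum]
    refine Finset.sum_congr rfl fun d _ => ?_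
    rw [← R.fp_hom b d]; ring
  have h2 : ∑ d : ι, R.fp d * ∑ c : ι, (R.N b d c : ℝ) * R.fp c
      = R.fp (R.star b) * ∑ d : ι, R.fp d ^ 2 := by
    calc ∑ d : ι, R.fp d * ∑ c : ι, (R.N b d c : ℝ) * R.fp c
        = ∑ d : ι, ∑ c : ι, ((R.N b d c : ℝ) * R.fp d) * R.fp c := by
          refine Finset.sum_congr rfl fun d _ => ?_
          rw [Finset.mul_sum]; exact Finset.sum_congr rfl fun c _ => by ring
      _ = ∑ c : ι, ∑ d : ι, ((R.N b d c : ℝ) * R.fp d) * R.fp c := Finset.sum_comm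
      _ = ∑ c : ι, (R.fp (R.star b) * R.fp c) * R.fp c := by
          refine Finset.sum_congr rfl fun c _ => ?_
          rw [← Finset.sum_mul, key]
      _ = R.fp (R.star b) * ∑ c : ι, R.fp c ^ 2 := by
          rw [Finset.mul_sum]
          exact Finset.sum_congr rfl fun c _ => by ring
  exact mul_right_cancel₀ (ne_of_gt R.fpdim_pos) (h2.symm.trans h1)

/-- first-index weighted sum -/
lemma sum_N_fst (E c : ι) : ∑ a : ι, (R.N a E c : ℝ) * R.fp a = R.fp E * R.fp c := by
  have inv : Function.Involutive R.star := R.star_invol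
  calc ∑ a : ι, (R.N a E c : ℝ) * R.fp a
      = ∑ a : ι, (R.N E (R.star c) (R.star a) : ℝ) * R.fp (R.star a) := by
        refine Finset.sum_congr rfl fun a _ => by rw [R.I1 a E c, R.fp_star]
    _ = ∑ a : ι, (R.N E (R.star c) a : ℝ) * R.fp a :=
        Fintype.sum_bijective R.star inv.bijective _ _ (fun a => rfl)
    _ = R.fp E * R.fp (R.star c) := (R.fp_hom E (R.star c)).symm
    _ = R.fp E * R.fp c := by rw [R.fp_star]

/-- middle-index weighted sum -/
lemma sum_N_mid (D a : ι) : ∑ X : ι, (R.N D X a : ℝ) * R.fp X = R.fp D * R.fp a := by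
  calc ∑ X : ι, (R.N D X a : ℝ) * R.fp X
      = ∑ X : ι, (R.N (R.star D) a X : ℝ) * R.fp X := by
        refine Finset.sum_congr rfl fun X _ => by rw [R.I3 D X a]
    _ = R.fp (R.star D) * R.fp a := (R.fp_hom _ _).symm
    _ = R.fp D * R.fp a := by rw [R.fp_star]

end FusionRing

namespace FusionRing

variable {ι : Type} [Fintype ι] [DecidableEq ι] (R : FusionRing ι)
open scoped Classical
set_option linter.unusedSectionVars false

/-- Matrix of the operator `x ↦ R_S · x · R_T` in the basis. -/
noncomputable def Mmat (S T : Finset ι) (c X : ι) : ℝ :=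
  ∑ D : ι, ∑ E : ι, R.reg S D * R.reg T E * ∑ a : ι, (R.N D X a : ℝ) * (R.N a E c : ℝ)

lemma reg_nonneg (S : Finset ι) (a : ι) : 0 ≤ R.reg S a := by
  unfold reg; split
  · exact (R.fp_pos a).le
  · exact le_rfl

lemma Mmat_nonneg (S T : Finset ι) (c X : ι) : 0 ≤ R.Mmat S T c X := by
  refine Finset.sum_nonneg fun D _ => Finset.sum_nonneg fun E _ => ?_
  refine mul_nonneg (mul_nonneg (R.reg_nonneg S D) (R.reg_nonneg T E))
    (Finset.sum_nonneg fun a _ => mul_nonneg (Nat.cast_nonneg _) (Nat.cast_nonneg _))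

private lemma sum_comm4 {M : Type} [AddCommMonoid M] (f : ι → ι → ι → ι → M) :
    ∑ p : ι, ∑ q : ι, ∑ D : ι, ∑ b : ι, f p q D b
      = ∑ b : ι, ∑ D : ι, ∑ q : ι, ∑ p : ι, f p q D b := by
  calc ∑ p : ι, ∑ q : ι, ∑ D : ι, ∑ b : ι, f p q D b
      = ∑ q : ι, ∑ p : ι, ∑ D : ι, ∑ b : ι, f p q D b := Finset.sum_comm
    _ = ∑ q : ι, ∑ D : ι, ∑ p : ι, ∑ b : ι, f p q D b :=
        Finset.sum_congr rfl fun q _ => Finset.sum_comm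
    _ = ∑ q : ι, ∑ D : ι, ∑ b : ι, ∑ p : ι, f p q D b :=
        Finset.sum_congr rfl fun q _ => Finset.sum_congr rfl fun D _ => Finset.sum_comm
    _ = ∑ D : ι, ∑ q : ι, ∑ b : ι, ∑ p : ι, f p q D b := Finset.sum_comm
    _ = ∑ D : ι, ∑ b : ι, ∑ q : ι, ∑ p : ι, f p q D b :=
        Finset.sum_congr rfl fun D _ => Finset.sum_comm
    _ = ∑ b : ι, ∑ D : ι, ∑ q : ι, ∑ p : ι, f p q D b := Finset.sum_comm

private lemma sum_pull (f : ι → ι → ι → ℝ) (g : ι → ℝ) :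
    ∑ X : ι, (∑ D : ι, ∑ E : ι, f D E X) * g X
      = ∑ D : ι, ∑ E : ι, ∑ X : ι, f D E X * g X := by
  calc ∑ X : ι, (∑ D : ι, ∑ E : ι, f D E X) * g X
      = ∑ X : ι, ∑ D : ι, ∑ E : ι, f D E X * g X := by
        refine Finset.sum_congr rfl fun X _ => ?_
        rw [Finset.sum_mul]
        exact Finset.sum_congr rfl fun D _ => by rw [Finset.sum_mul]
    _ = ∑ D : ι, ∑ X : ι, ∑ E : ι, f D E X * g X := Finset.sum_comm
    _ = ∑ D : ι, ∑ E : ι, ∑ X : ι, f D E X * g X :=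
        Finset.sum_congr rfl fun D _ => Finset.sum_comm

/-- The operator acts by the matrix `Mmat`. -/
lemma mul_reg_reg (S T : Finset ι) (x : ι → ℝ) (c : ι) :
    R.mul (R.mul (R.reg S) x) (R.reg T) c = ∑ X : ι, R.Mmat S T c X * x X := by
  unfold mul Mmat
  calc ∑ p : ι, ∑ q : ι, (∑ D : ι, ∑ b : ι, R.reg S D * x b * (R.N D b p : ℝ))
        * R.reg T q * (R.N p q c : ℝ)
      = ∑ p : ι, ∑ q : ι, ∑ D : ι, ∑ b : ι,
          R.reg S D * R.reg T q * ((R.N D b p : ℝ) * (R.N p q c : ℝ)) * x b := by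
        refine Finset.sum_congr rfl fun p _ => Finset.sum_congr rfl fun q _ => ?_
        rw [Finset.sum_mul, Finset.sum_mul]
        refine Finset.sum_congr rfl fun D _ => ?_
        rw [Finset.sum_mul, Finset.sum_mul]
        exact Finset.sum_congr rfl fun b _ => by ring
    _ = ∑ b : ι, ∑ D : ι, ∑ q : ι, ∑ p : ι,
          R.reg S D * R.reg T q * ((R.N D b p : ℝ) * (R.N p q c : ℝ)) * x b :=
        sum_comm4 _
    _ = ∑ X : ι, (∑ D : ι, ∑ E : ι, R.reg S D * R.reg T E
          * ∑ a : ι, (R.N D X a : ℝ) * (R.N a E c : ℝ)) * x X := by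
        refine Finset.sum_congr rfl fun b _ => ?_
        rw [Finset.sum_mul]
        refine Finset.sum_congr rfl fun D _ => ?_
        rw [Finset.sum_mul]
        refine Finset.sum_congr rfl fun q _ => ?_
        rw [Finset.mul_sum, Finset.sum_mul]
        try exact Finset.sum_congr rfl fun p _ => by ring

private lemma fpdim_prod_step (S T : Finset ι) (u v w : ι → ℝ) :
    ∑ D : ι, ∑ E : ι, R.reg S D * R.reg T E * (R.fp D * (R.fp E * w D)) =
      ∑ D : ι, (if D ∈ S then R.fp D ^ 2 else 0) * ((∑ E : ι, if E ∈ T then R.fp E ^ 2 else 0) * w D) := by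
  refine Finset.sum_congr rfl fun D _ => ?_
  rw [Finset.sum_mul, Finset.mul_sum]
  refine Finset.sum_congr rfl fun E _ => ?_
  unfold reg
  split_ifs <;> ring

private lemma inner_row (D E c : ι) :
    ∑ X : ι, (∑ a : ι, (R.N D X a : ℝ) * (R.N a E c : ℝ)) * R.fp X
      = R.fp D * (R.fp E * R.fp c) := by
  calc ∑ X : ι, (∑ a : ι, (R.N D X a : ℝ) * (R.N a E c : ℝ)) * R.fp X
      = ∑ X : ι, ∑ a : ι, ((R.N D X a : ℝ) * R.fp X) * (R.N a E c : ℝ) := by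
        refine Finset.sum_congr rfl fun X _ => ?_
        rw [Finset.sum_mul]
        exact Finset.sum_congr rfl fun a _ => by ring
    _ = ∑ a : ι, ∑ X : ι, ((R.N D X a : ℝ) * R.fp X) * (R.N a E c : ℝ) := Finset.sum_comm
    _ = ∑ a : ι, (R.fp D * R.fp a) * (R.N a E c : ℝ) := by
        refine Finset.sum_congr rfl fun a _ => ?_
        rw [← Finset.sum_mul, R.sum_N_mid]
    _ = R.fp D * ∑ a : ι, (R.N a E c : ℝ) * R.fp a := by
        rw [Finset.mul_sum]
        exact Finset.sum_congr rfl fun a _ => by ring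
    _ = R.fp D * (R.fp E * R.fp c) := by rw [R.sum_N_fst]

private lemma inner_col (D E X : ι) :
    ∑ c : ι, (∑ a : ι, (R.N D X a : ℝ) * (R.N a E c : ℝ)) * R.fp c
      = R.fp D * (R.fp E * R.fp X) := by
  calc ∑ c : ι, (∑ a : ι, (R.N D X a : ℝ) * (R.N a E c : ℝ)) * R.fp c
      = ∑ c : ι, ∑ a : ι, (R.N D X a : ℝ) * ((R.N a E c : ℝ) * R.fp c) := by
        refine Finset.sum_congr rfl fun c _ => ?_
        rw [Finset.sum_mul]
        exact Finset.sum_congr rfl fun a _ => by ring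
    _ = ∑ a : ι, ∑ c : ι, (R.N D X a : ℝ) * ((R.N a E c : ℝ) * R.fp c) := Finset.sum_comm
    _ = ∑ a : ι, (R.N D X a : ℝ) * (R.fp a * R.fp E) := by
        refine Finset.sum_congr rfl fun a _ => ?_
        rw [← Finset.mul_sum, R.fp_hom a E]
    _ = (∑ a : ι, (R.N D X a : ℝ) * R.fp a) * R.fp E := by
        rw [Finset.sum_mul]
        exact Finset.sum_congr rfl fun a _ => by ring
    _ = R.fp D * (R.fp E * R.fp X) := by rw [← R.fp_hom D X]; ring

private lemma final_step (S T : Finset ι) (w : ι → ℝ) (c : ι) :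
    ∑ D : ι, ∑ E : ι, R.reg S D * R.reg T E * (R.fp D * (R.fp E * R.fp c))
      = (R.fpdimS S * R.fpdimS T) * R.fp c := by
  rw [R.fpdim_prod_step S T w w (fun _ => R.fp c)]
  rw [← Finset.sum_mul]
  unfold fpdimS
  rw [Finset.sum_ite_mem, Finset.sum_ite_mem, Finset.univ_inter, Finset.univ_inter]
  ring

/-- Row sums: `M · fp = λ · fp`. -/
lemma Mmat_row (S T : Finset ι) (c : ι) :
    ∑ X : ι, R.Mmat S T c X * R.fp X = (R.fpdimS S * R.fpdimS T) * R.fp c := by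
  unfold Mmat
  rw [sum_pull]
  rw [← R.final_step S T R.fp c]
  refine Finset.sum_congr rfl fun D _ => Finset.sum_congr rfl fun E _ => ?_
  rw [← R.inner_row D E c, Finset.mul_sum]
  exact Finset.sum_congr rfl fun X _ => by ring

/-- Column sums: `fpᵀ · M = λ · fpᵀ`. -/
lemma Mmat_col (S T : Finset ι) (X : ι) :
    ∑ c : ι, R.Mmat S T c X * R.fp c = (R.fpdimS S * R.fpdimS T) * R.fp X := by
  unfold Mmat
  rw [sum_pull]
  rw [← R.final_step S T R.fp X]
  refine Finset.sum_congr rfl fun D _ => Finset.sum_congr rfl fun E _ => ?_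
  rw [← R.inner_col D E X, Finset.mul_sum]
  exact Finset.sum_congr rfl fun c _ => by ring

end FusionRing

namespace FusionRing

variable {ι : Type} [Fintype ι] [DecidableEq ι] (R : FusionRing ι)
open scoped Classical
set_option linter.unusedSectionVars false

/-- positivity of the matrix entry characterizes the relation -/
lemma Mmat_pos_iff (S T : Finset ι) (c X : ι) :
    0 < R.Mmat S T c X ↔ R.dcRel S T X c := by
  constructor
  · intro h
    by_contra hn
    unfold dcRel at hn
    push_neg at hn
    have hz : R.Mmat S T c X = 0 := by
      unfold Mmat
      refine Finset.sum_eq_zero fun D _ => Finset.sum_eq_zero fun E _ => ?_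
      by_cases hD : D ∈ S
      · by_cases hE : E ∈ T
        · have h0 := hn D hD E hE
          have : ∑ a, R.N D X a * R.N a E c = 0 := Nat.le_zero.mp h0
          have : (∑ a : ι, (R.N D X a : ℝ) * (R.N a E c : ℝ)) = 0 := by
            have := congrArg (Nat.cast (R := ℝ)) this
            push_cast at this
            simpa using this
          rw [this, mul_zero]
        · simp [reg, hE]
      · simp [reg, hD]
    rw [hz] at h; exact lt_irrefl 0 h
  · rintro ⟨D, hD, E, hE, hpos⟩
    have hterm : 0 < R.reg S D * R.reg T E * ∑ a : ι, (R.N D X a : ℝ) * (R.N a E c : ℝ) := by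
      have h1 : 0 < R.reg S D := by simp [reg, hD, R.fp_pos]
      have h2 : 0 < R.reg T E := by simp [reg, hE, R.fp_pos]
      have h3 : (0:ℝ) < ∑ a : ι, (R.N D X a : ℝ) * (R.N a E c : ℝ) := by
        have : (0:ℝ) < ((∑ a, R.N D X a * R.N a E c : ℕ) : ℝ) := by
          exact_mod_cast hpos
        convert this using 1
        push_cast; rfl
      positivity
    calc (0:ℝ) < R.reg S D * R.reg T E * ∑ a : ι, (R.N D X a : ℝ) * (R.N a E c : ℝ) := hterm
      _ ≤ R.Mmat S T c X := by
        unfold Mmat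
        have hsum : ∀ D' : ι, 0 ≤ ∑ E' : ι, R.reg S D' * R.reg T E'
            * ∑ a : ι, (R.N D' X a : ℝ) * (R.N a E' c : ℝ) := by
          intro D'
          refine Finset.sum_nonneg fun E' _ => mul_nonneg (mul_nonneg (R.reg_nonneg _ _)
            (R.reg_nonneg _ _)) (Finset.sum_nonneg fun a _ =>
              mul_nonneg (Nat.cast_nonneg _) (Nat.cast_nonneg _))
        calc R.reg S D * R.reg T E * ∑ a : ι, (R.N D X a : ℝ) * (R.N a E c : ℝ)
            ≤ ∑ E' : ι, R.reg S D * R.reg T E' * ∑ a : ι, (R.N D X a : ℝ) * (R.N a E' c : ℝ) :=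
              Finset.single_le_sum (f := fun E' => R.reg S D * R.reg T E'
                * ∑ a : ι, (R.N D X a : ℝ) * (R.N a E' c : ℝ))
                (fun E' _ => mul_nonneg (mul_nonneg (R.reg_nonneg _ _) (R.reg_nonneg _ _))
                  (Finset.sum_nonneg fun a _ => mul_nonneg (Nat.cast_nonneg _) (Nat.cast_nonneg _)))
                (Finset.mem_univ E)
          _ ≤ ∑ D' : ι, ∑ E' : ι, R.reg S D' * R.reg T E'
                * ∑ a : ι, (R.N D' X a : ℝ) * (R.N a E' c : ℝ) :=
              Finset.single_le_sum (f := fun D' => ∑ E' : ι, R.reg S D' * R.reg T E'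
                * ∑ a : ι, (R.N D' X a : ℝ) * (R.N a E' c : ℝ))
                (fun D' _ => hsum D') (Finset.mem_univ D)

variable {S T : Finset ι}

lemma dcRel_refl (hS : R.IsFusionSubset S) (hT : R.IsFusionSubset T) (X : ι) :
    R.dcRel S T X X := by
  refine ⟨R.one, hS.1, R.one, hT.1, ?_⟩
  have : R.N R.one X X * R.N X R.one X = 1 := by
    rw [R.one_mul, R.mul_one]; simp
  calc 0 < R.N R.one X X * R.N X R.one X := by rw [this]; norm_num
    _ ≤ ∑ a, R.N R.one X a * R.N a R.one X :=
        Finset.single_le_sum (f := fun a => R.N R.one X a * R.N a R.one X)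
          (fun a _ => Nat.zero_le _) (Finset.mem_univ X)

/-- extract a positive middle term -/
lemma dcRel_exists (h : R.dcRel S T X Y) :
    ∃ D ∈ S, ∃ E ∈ T, ∃ a, 0 < R.N D X a ∧ 0 < R.N a E Y := by
  obtain ⟨D, hD, E, hE, hpos⟩ := h
  obtain ⟨a, -, ha⟩ := Finset.exists_lt_of_sum_lt (f := fun _ => 0)
    (g := fun a => R.N D X a * R.N a E Y) (by simpa using hpos)
  simp only [Nat.lt_iff_add_one_le, Nat.zero_add] at ha
  have ha' : 0 < R.N D X a * R.N a E Y := ha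
  exact ⟨D, hD, E, hE, a, Nat.pos_of_ne_zero (fun h0 => by simp [h0] at ha'),
    Nat.pos_of_ne_zero (fun h0 => by simp [h0] at ha')⟩

end FusionRing

namespace FusionRing

variable {ι : Type} [Fintype ι] [DecidableEq ι] (R : FusionRing ι)
open scoped Classical
set_option linter.unusedSectionVars false

lemma I4 (a b c : ι) : R.N a b c = R.N c (R.star b) a := by
  rw [R.I1 a b c, R.I1 b (R.star c) (R.star a), R.star_invol, R.I3, R.star_invol]

private lemma sum_pos_of_term {f : ι → ℕ} {a : ι} (h : 0 < f a) : 0 < ∑ i, f i :=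
  lt_of_lt_of_le h (Finset.single_le_sum (fun i _ => Nat.zero_le _) (Finset.mem_univ a))

variable {S T : Finset ι}

lemma dcRel_symm (hS : R.IsFusionSubset S) (hT : R.IsFusionSubset T) {X Y : ι}
    (h : R.dcRel S T X Y) : R.dcRel S T Y X := by
  obtain ⟨D, hD, E, hE, a, h1, h2⟩ := R.dcRel_exists h
  refine ⟨R.star D, hS.2.1 D hD, R.star E, hT.2.1 E hE, ?_⟩
  rw [R.assoc (R.star D) Y (R.star E) X]
  have k1 : 0 < R.N Y (R.star E) a := by rw [← R.I4 a E Y]; exact h2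
  have k2 : 0 < R.N (R.star D) a X := by rw [← R.I3 D X a]; exact h1
  exact sum_pos_of_term (a := a) (Nat.mul_pos k1 k2)

lemma dcRel_trans (hS : R.IsFusionSubset S) (hT : R.IsFusionSubset T) {X Y Z : ι}
    (h : R.dcRel S T X Y) (h' : R.dcRel S T Y Z) : R.dcRel S T X Z := by
  obtain ⟨D, hD, E, hE, a, h1, h2⟩ := R.dcRel_exists h
  obtain ⟨D', hD', E', hE', b, h3, h4⟩ := R.dcRel_exists h'
  -- b occurs in D'·(a·E) = (D'·a)·E : get u with N D' a u > 0, N u E b > 0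
  have step1 : 0 < ∑ x, R.N D' a x * R.N x E b := by
    rw [R.assoc D' a E b]
    exact sum_pos_of_term (a := Y) (Nat.mul_pos h2 h3)
  obtain ⟨u, hu1, hu2⟩ : ∃ u, 0 < R.N D' a u ∧ 0 < R.N u E b := by
    obtain ⟨u, -, hu⟩ := Finset.exists_lt_of_sum_lt (f := fun _ => 0)
      (g := fun u => R.N D' a u * R.N u E b) (by simpa using step1)
    have hu' : 0 < R.N D' a u * R.N u E b := hu
    exact ⟨u, Nat.pos_of_ne_zero (fun h0 => by simp [h0] at hu'),
      Nat.pos_of_ne_zero (fun h0 => by simp [h0] at hu')⟩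
  -- u occurs in (D'·D)·X : get s with N D' D s > 0, N s X u > 0
  have step2 : 0 < ∑ x, R.N D' D x * R.N x X u := by
    rw [R.assoc D' D X u]
    exact sum_pos_of_term (a := a) (Nat.mul_pos h1 hu1)
  obtain ⟨s, hs1, hs2⟩ : ∃ s, 0 < R.N D' D s ∧ 0 < R.N s X u := by
    obtain ⟨s, -, hs⟩ := Finset.exists_lt_of_sum_lt (f := fun _ => 0)
      (g := fun s => R.N D' D s * R.N s X u) (by simpa using step2)
    have hs' : 0 < R.N D' D s * R.N s X u := hs
    exact ⟨s, Nat.pos_of_ne_zero (fun h0 => by simp [h0] at hs'),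
      Nat.pos_of_ne_zero (fun h0 => by simp [h0] at hs')⟩
  -- Z occurs in u·(E·E') : get t with N E E' t > 0, N u t Z > 0
  have step3 : 0 < ∑ x, R.N E E' x * R.N u x Z := by
    rw [← R.assoc u E E' Z]
    exact sum_pos_of_term (a := b) (Nat.mul_pos hu2 h4)
  obtain ⟨t, ht1, ht2⟩ : ∃ t, 0 < R.N E E' t ∧ 0 < R.N u t Z := by
    obtain ⟨t, -, ht⟩ := Finset.exists_lt_of_sum_lt (f := fun _ => 0)
      (g := fun t => R.N E E' t * R.N u t Z) (by simpa using step3)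
    have ht' : 0 < R.N E E' t * R.N u t Z := ht
    exact ⟨t, Nat.pos_of_ne_zero (fun h0 => by simp [h0] at ht'),
      Nat.pos_of_ne_zero (fun h0 => by simp [h0] at ht')⟩
  refine ⟨s, hS.2.2 D' hD' D hD s hs1, t, hT.2.2 E hE E' hE' t ht1, ?_⟩
  exact sum_pos_of_term (a := u) (Nat.mul_pos hs2 ht2)

end FusionRing

namespace FusionRing

variable {ι : Type} [Fintype ι] [DecidableEq ι] (R : FusionRing ι)
open scoped Classical
set_option linter.unusedSectionVars false

variable {S T : Finset ι}

lemma Mmat_eq_zero {Z c : ι} (h : ¬ R.dcRel S T Z c) : R.Mmat S T c Z = 0 := by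
  by_contra hne
  exact h ((R.Mmat_pos_iff S T c Z).mp
    (lt_of_le_of_ne (R.Mmat_nonneg S T c Z) (Ne.symm hne)))

/-- The eigenvalue bound. -/
lemma eig_bound (hS : R.IsFusionSubset S) (hT : R.IsFusionSubset T)
    (μ : ℝ) (x : ι → ℝ) (hx : x ≠ 0)
    (heig : ∀ c, ∑ X, R.Mmat S T c X * x X = μ * x c) :
    μ ≤ R.fpdimS S * R.fpdimS T := by
  set lam := R.fpdimS S * R.fpdimS T with hlam
  obtain ⟨c, -, hcmax⟩ := Finset.exists_max_image Finset.univ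
    (fun Z => |x Z| / R.fp Z) ⟨R.one, Finset.mem_univ _⟩
  have hm : ∀ Z, |x Z| * R.fp c ≤ |x c| * R.fp Z := by
    intro Z
    have := hcmax Z (Finset.mem_univ Z)
    rwa [div_le_div_iff₀ (R.fp_pos Z) (R.fp_pos c)] at this
  have hxc : 0 < |x c| := by
    obtain ⟨c₀, hc₀⟩ := Function.ne_iff.mp hx
    have h0 : (0:ℝ) < |x c₀| * R.fp c := by
      have : 0 < |x c₀| := abs_pos.mpr hc₀
      exact mul_pos this (R.fp_pos c)
    have h1 := lt_of_lt_of_le h0 (hm c₀)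
    nlinarith [R.fp_pos c₀, abs_nonneg (x c)]
  have key : μ * (|x c| * R.fp c) ≤ lam * (|x c| * R.fp c) := by
    calc μ * (|x c| * R.fp c) = (μ * |x c|) * R.fp c := by ring
      _ ≤ |μ * x c| * R.fp c := by
          refine mul_le_mul_of_nonneg_right ?_ (R.fp_pos c).le
          calc μ * |x c| ≤ |μ| * |x c| := mul_le_mul_of_nonneg_right (le_abs_self μ) (abs_nonneg _)
            _ = |μ * x c| := (abs_mul μ (x c)).symm
      _ = |∑ X, R.Mmat S T c X * x X| * R.fp c := by rw [heig c]
      _ ≤ (∑ X, R.Mmat S T c X * |x X|) * R.fp c := by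
          refine mul_le_mul_of_nonneg_right ?_ (R.fp_pos c).le
          calc |∑ X, R.Mmat S T c X * x X| ≤ ∑ X, |R.Mmat S T c X * x X| :=
                Finset.abs_sum_le_sum_abs _ _
            _ = ∑ X, R.Mmat S T c X * |x X| := by
                refine Finset.sum_congr rfl fun X _ => ?_
                rw [abs_mul, abs_of_nonneg (R.Mmat_nonneg S T c X)]
      _ = ∑ X, R.Mmat S T c X * (|x X| * R.fp c) := by
          rw [Finset.sum_mul]
          exact Finset.sum_congr rfl fun X _ => by ring
      _ ≤ ∑ X, R.Mmat S T c X * (|x c| * R.fp X) := by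
          refine Finset.sum_le_sum fun X _ => ?_
          exact mul_le_mul_of_nonneg_left (hm X) (R.Mmat_nonneg S T c X)
      _ = (∑ X, R.Mmat S T c X * R.fp X) * |x c| := by
          rw [Finset.sum_mul]
          exact Finset.sum_congr rfl fun X _ => by ring
      _ = lam * R.fp c * |x c| := by rw [R.Mmat_row S T c]
      _ = lam * (|x c| * R.fp c) := by ring
  exact le_of_mul_le_mul_right key (mul_pos hxc (R.fp_pos c))

/-- Eigenvectors for the top eigenvalue are proportional to `fp` on each class. -/
lemma eig_const (hS : R.IsFusionSubset S) (hT : R.IsFusionSubset T) {x : ι → ℝ}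
    (heig : ∀ c, ∑ Z, R.Mmat S T c Z * x Z = (R.fpdimS S * R.fpdimS T) * x c)
    {X Y : ι} (hXY : R.dcRel S T X Y) : x Y * R.fp X = x X * R.fp Y := by
  set lam := R.fpdimS S * R.fpdimS T with hlam
  set Λ : Finset ι := Finset.univ.filter (fun Z => R.dcRel S T X Z) with hΛ
  have hXΛ : X ∈ Λ := by simp [hΛ, R.dcRel_refl hS hT]
  have hYΛ : Y ∈ Λ := by simp [hΛ, hXY]
  obtain ⟨c, hcΛ, hcmax⟩ := Finset.exists_max_image Λ (fun Z => x Z / R.fp Z) ⟨X, hXΛ⟩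
  have hcX : R.dcRel S T X c := by
    have := hcΛ; simp only [hΛ, Finset.mem_filter] at this; exact this.2
  have hm : ∀ Z ∈ Λ, x Z * R.fp c ≤ x c * R.fp Z := by
    intro Z hZ
    have := hcmax Z hZ
    rwa [div_le_div_iff₀ (R.fp_pos Z) (R.fp_pos c)] at this
  have hMzero : ∀ Z, Z ∉ Λ → R.Mmat S T c Z = 0 := by
    intro Z hZ
    refine R.Mmat_eq_zero fun hZc => ?_
    exact hZ (by
      simp only [hΛ, Finset.mem_filter, Finset.mem_univ, true_and]
      exact R.dcRel_trans hS hT hcX (R.dcRel_symm hS hT hZc))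
  have hMpos : ∀ Z ∈ Λ, 0 < R.Mmat S T c Z := by
    intro Z hZ
    rw [R.Mmat_pos_iff]
    have hXZ : R.dcRel S T X Z := by
      simp only [hΛ, Finset.mem_filter] at hZ; exact hZ.2
    exact R.dcRel_trans hS hT (R.dcRel_symm hS hT hXZ) hcX
  have hrestrict : ∀ (g : ι → ℝ),
      ∑ Z ∈ Λ, R.Mmat S T c Z * g Z = ∑ Z, R.Mmat S T c Z * g Z :=
    fun g => Finset.sum_subset (Finset.subset_univ Λ)
      (fun Z _ hZ => by rw [hMzero Z hZ, zero_mul])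
  have hsum0 : ∑ Z ∈ Λ, R.Mmat S T c Z * (x c * R.fp Z - x Z * R.fp c) = 0 := by
    have e1 : ∑ Z ∈ Λ, R.Mmat S T c Z * (x c * R.fp Z) = x c * (lam * R.fp c) := by
      calc ∑ Z ∈ Λ, R.Mmat S T c Z * (x c * R.fp Z)
          = x c * ∑ Z ∈ Λ, R.Mmat S T c Z * R.fp Z := by
            rw [Finset.mul_sum]
            exact Finset.sum_congr rfl fun Z _ => by ring
        _ = x c * ∑ Z, R.Mmat S T c Z * R.fp Z := by rw [hrestrict]
        _ = x c * (lam * R.fp c) := by rw [R.Mmat_row S T c]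
    have e2 : ∑ Z ∈ Λ, R.Mmat S T c Z * (x Z * R.fp c) = R.fp c * (lam * x c) := by
      calc ∑ Z ∈ Λ, R.Mmat S T c Z * (x Z * R.fp c)
          = R.fp c * ∑ Z ∈ Λ, R.Mmat S T c Z * x Z := by
            rw [Finset.mul_sum]
            exact Finset.sum_congr rfl fun Z _ => by ring
        _ = R.fp c * ∑ Z, R.Mmat S T c Z * x Z := by rw [hrestrict]
        _ = R.fp c * (lam * x c) := by rw [heig c]
    calc ∑ Z ∈ Λ, R.Mmat S T c Z * (x c * R.fp Z - x Z * R.fp c)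
        = ∑ Z ∈ Λ, (R.Mmat S T c Z * (x c * R.fp Z) - R.Mmat S T c Z * (x Z * R.fp c)) := by
          exact Finset.sum_congr rfl fun Z _ => by ring
      _ = (∑ Z ∈ Λ, R.Mmat S T c Z * (x c * R.fp Z))
            - ∑ Z ∈ Λ, R.Mmat S T c Z * (x Z * R.fp c) := Finset.sum_sub_distrib _ _
      _ = 0 := by rw [e1, e2]; ring
  have hzero : ∀ Z ∈ Λ, x c * R.fp Z = x Z * R.fp c := by
    have hterms := (Finset.sum_eq_zero_iff_of_nonneg (fun Z hZ =>
      mul_nonneg (R.Mmat_nonneg S T c Z) (sub_nonneg.mpr (hm Z hZ)))).mp hsum0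
    intro Z hZ
    have h := hterms Z hZ
    rcases mul_eq_zero.mp h with h' | h'
    · exact absurd h' (ne_of_gt (hMpos Z hZ))
    · have := sub_eq_zero.mp h'
      linarith
  have e1 := hzero Y hYΛ
  have e2 := hzero X hXΛ
  apply mul_right_cancel₀ (ne_of_gt (R.fp_pos c))
  linear_combination R.fp Y * e2 - R.fp X * e1

/-- Each class vector is an eigenvector for the top eigenvalue. -/
lemma classVec_eig (hS : R.IsFusionSubset S) (hT : R.IsFusionSubset T) (X c : ι) :
    ∑ Z, R.Mmat S T c Z * R.classVec S T X Z
      = (R.fpdimS S * R.fpdimS T) * R.classVec S T X c := by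
  unfold classVec
  by_cases hc : R.dcRel S T X c
  · rw [if_pos hc]
    calc ∑ Z, R.Mmat S T c Z * (if R.dcRel S T X Z then R.fp Z else 0)
        = ∑ Z, R.Mmat S T c Z * R.fp Z := by
          refine Finset.sum_congr rfl fun Z _ => ?_
          by_cases hZ : R.dcRel S T X Z
          · rw [if_pos hZ]
          · rw [if_neg hZ, mul_zero, R.Mmat_eq_zero (fun hZc =>
              hZ (R.dcRel_trans hS hT hc (R.dcRel_symm hS hT hZc))), zero_mul]
      _ = (R.fpdimS S * R.fpdimS T) * R.fp c := R.Mmat_row S T c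
  · rw [if_neg hc, mul_zero]
    refine Finset.sum_eq_zero fun Z _ => ?_
    by_cases hZ : R.dcRel S T X Z
    · rw [R.Mmat_eq_zero (fun hZc => hc (R.dcRel_trans hS hT hZ hZc)), zero_mul]
    · rw [if_neg hZ, mul_zero]

end FusionRing


/-- `FPdim(S)·FPdim(T)` is the largest eigenvalue of the operator `x ↦ R_S·x·R_T` on
`R ⊗ ℝ`, and its eigenspace has the family `(A_i)` of double coset sums as a basis. -/
theorem dc_eigenspace_basis {ι : Type} [Fintype ι] [DecidableEq ι] (R : FusionRing ι)
    (S T : Finset ι) (hS : R.IsFusionSubset S) (hT : R.IsFusionSubset T) :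
    (∀ (μ : ℝ) (x : ι → ℝ), x ≠ 0 →
        R.mul (R.mul (R.reg S) x) (R.reg T) = μ • x → μ ≤ R.fpdimS S * R.fpdimS T) ∧
    ∃ Reps : Finset ι,
      (∀ X : ι, ∃! Y, Y ∈ Reps ∧ R.dcRel S T X Y) ∧
      LinearIndependent ℝ (fun Y : Reps => R.classVec S T (Y : ι)) ∧
      (Submodule.span ℝ (Set.range fun Y : Reps => R.classVec S T (Y : ι)) : Set (ι → ℝ)) =
        {x | R.mul (R.mul (R.reg S) x) (R.reg T) = (R.fpdimS S * R.fpdimS T) • x} := by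
  classical
  set lam := R.fpdimS S * R.fpdimS T with hlam
  -- pointwise characterization of the operator equation
  have hmem : ∀ (ν : ℝ) (x : ι → ℝ), (R.mul (R.mul (R.reg S) x) (R.reg T) = ν • x) ↔
      ∀ c, ∑ X, R.Mmat S T c X * x X = ν * x c := by
    intro ν x
    constructor
    · intro h c
      have := congrFun h c
      rw [R.mul_reg_reg] at this
      simpa using this
    · intro h
      funext c
      rw [R.mul_reg_reg]
      simpa using h c
  constructor
  · intro μ x hx heq
    exact R.eig_bound hS hT μ x hx ((hmem μ x).mp heq)
  · -- set up representatives
    let sd : Setoid ι := ⟨R.dcRel S T,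
      ⟨R.dcRel_refl hS hT, fun h => R.dcRel_symm hS hT h,
        fun h h' => R.dcRel_trans hS hT h h'⟩⟩
    let rep : ι → ι := fun X => (Quotient.mk sd X).out
    have hrep : ∀ X, R.dcRel S T (rep X) X := fun X => Quotient.mk_out (s := sd) X
    have hrepeq : ∀ {X Y}, R.dcRel S T X Y → rep X = rep Y := by
      intro X Y h
      show (Quotient.mk sd X).out = (Quotient.mk sd Y).out
      congr 1
      exact Quotient.sound h
    set Reps : Finset ι := Finset.univ.image rep with hReps
    have hfix : ∀ Y ∈ Reps, rep Y = Y := by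
      intro Y hY
      obtain ⟨Z, -, rfl⟩ := Finset.mem_image.mp hY
      exact hrepeq (hrep Z)
    have hinj : ∀ Y ∈ Reps, ∀ Y' ∈ Reps, R.dcRel S T Y Y' → Y = Y' := by
      intro Y hY Y' hY' h
      rw [← hfix Y hY, ← hfix Y' hY']
      exact hrepeq h
    have hmemReps : ∀ X, rep X ∈ Reps := fun X =>
      Finset.mem_image.mpr ⟨X, Finset.mem_univ X, rfl⟩
    have huniq : ∀ X : ι, ∃! Y, Y ∈ Reps ∧ R.dcRel S T X Y := by
      intro X
      refine ⟨rep X, ⟨hmemReps X, R.dcRel_symm hS hT (hrep X)⟩, ?_⟩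
      rintro Y ⟨hYm, hXY⟩
      have h1 : rep X = rep Y := hrepeq hXY
      rw [← hfix Y hYm, ← h1]
    refine ⟨Reps, huniq, ?_, ?_⟩
    · -- linear independence
      rw [Fintype.linearIndependent_iff]
      intro g hg Y
      have hgY := congrFun hg (Y : ι)
      simp only [Finset.sum_apply, Pi.smul_apply, smul_eq_mul, Pi.zero_apply] at hgY
      rw [Finset.sum_eq_single Y] at hgY
      · have hYY : R.classVec S T (Y : ι) (Y : ι) = R.fp (Y : ι) := by
          unfold FusionRing.classVec
          rw [if_pos (R.dcRel_refl hS hT _)]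
        rw [hYY] at hgY
        rcases mul_eq_zero.mp hgY with h | h
        · exact h
        · exact absurd h (ne_of_gt (R.fp_pos _))
      · intro Z _ hZY
        have : R.classVec S T (Z : ι) (Y : ι) = 0 := by
          unfold FusionRing.classVec
          rw [if_neg]
          intro hrel
          exact hZY (Subtype.ext (hinj _ Z.2 _ Y.2 hrel))
        rw [this, mul_zero]
      · intro h
        exact absurd (Finset.mem_univ Y) h
    · -- span equals eigenspace
      apply subset_antisymm
      · -- span ⊆ eigenspace
        intro x hx
        have : x ∈ Submodule.span ℝ (Set.range fun Y : Reps => R.classVec S T (Y : ι)) := hx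
        refine Submodule.span_induction ?_ ?_ ?_ ?_ this
        · rintro y ⟨Y, rfl⟩
          exact (hmem lam _).mpr (fun c => R.classVec_eig hS hT (Y : ι) c)
        · exact (hmem lam 0).mpr (fun c => by simp)
        · intro a b _ _ ha hb
          have ha' : ∀ c, ∑ X, R.Mmat S T c X * a X = lam * a c := (hmem lam a).mp ha
          have hb' : ∀ c, ∑ X, R.Mmat S T c X * b X = lam * b c := (hmem lam b).mp hb
          refine (hmem lam (a + b)).mpr (fun c => ?_)
          have hsplit : ∑ X, R.Mmat S T c X * (a X + b X)
              = (∑ X, R.Mmat S T c X * a X) + ∑ X, R.Mmat S T c X * b X := by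
            rw [← Finset.sum_add_distrib]
            exact Finset.sum_congr rfl fun X _ => by ring
          calc ∑ X, R.Mmat S T c X * (a + b) X
              = (∑ X, R.Mmat S T c X * a X) + ∑ X, R.Mmat S T c X * b X := hsplit
            _ = lam * a c + lam * b c := by rw [ha' c, hb' c]
            _ = lam * (a + b) c := by simp [mul_add]
        · intro r a _ ha
          have ha' : ∀ c, ∑ X, R.Mmat S T c X * a X = lam * a c := (hmem lam a).mp ha
          refine (hmem lam (r • a)).mpr (fun c => ?_)
          calc ∑ X, R.Mmat S T c X * (r • a) X
              = r * ∑ X, R.Mmat S T c X * a X := by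
                rw [Finset.mul_sum]
                refine Finset.sum_congr rfl fun X _ => ?_
                simp only [Pi.smul_apply, smul_eq_mul]
                ring
            _ = r * (lam * a c) := by rw [ha' c]
            _ = lam * (r • a) c := by simp only [Pi.smul_apply, smul_eq_mul]; ring
      · -- eigenspace ⊆ span
        intro x hxE
        have hx : ∀ c, ∑ X, R.Mmat S T c X * x X = lam * x c := (hmem lam x).mp hxE
        have hrepr : x = ∑ Y ∈ Reps, (x Y / R.fp Y) • R.classVec S T Y := by
          funext c
          rw [Finset.sum_apply]
          rw [Finset.sum_eq_single (rep c)]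
          · have hY0 : R.classVec S T (rep c) c = R.fp c := by
              unfold FusionRing.classVec
              rw [if_pos (hrep c)]
            rw [Pi.smul_apply, hY0, smul_eq_mul]
            have hconst : x (rep c) * R.fp c = x c * R.fp (rep c) :=
              R.eig_const hS hT hx (R.dcRel_symm hS hT (hrep c))
            rw [div_mul_eq_mul_div, hconst, mul_div_assoc,
              div_self (ne_of_gt (R.fp_pos (rep c))), mul_one]
          · intro Y hYm hYne
            have : R.classVec S T Y c = 0 := by
              unfold FusionRing.classVec
              rw [if_neg]
              intro hrel
              have : R.dcRel S T Y (rep c) :=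
                R.dcRel_trans hS hT hrel (R.dcRel_symm hS hT (hrep c))
              exact hYne (hinj Y hYm (rep c) (hmemReps c) this)
            rw [Pi.smul_apply, this, smul_eq_mul, mul_zero]
          · intro h
            exact absurd (hmemReps c) h
        rw [hrepr]
        refine Submodule.sum_mem _ fun Y hY => Submodule.smul_mem _ _ ?_
        exact Submodule.subset_span ⟨⟨Y, hY⟩, rfl⟩
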